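/- Let A be an invertible real n×n matrix and define γ(t) = A e^{−2t} + (1 − e^{−2t})·A(√(AᵀA))⁻¹ for t ≥ 0. Then γ(0) = A, γ(t) is invertible for all t ≥ 0, γ satisfies the differential equation γ′(t) = −2γ(t) + 2(γ(t)ᵀ)⁻¹·√(γ(t)ᵀγ(t)) for all t ≥ 0, and γ(t) converges as t → ∞ to the orthogonal matrix A(√(AᵀA))⁻¹. -/

import Mathlib

open Matrix Filter

attribute [local instance] Matrix.normedAddCommGroup Matrix.normedSpace

open scoped Classical in
/-- The unique positive semidefinite square root of a positive semidefinite real matrix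
(junk value `0` on matrices that are not positive semidefinite). -/
noncomputable def psdSqrt {n : ℕ} (X : Matrix (Fin n) (Fin n) ℝ) : Matrix (Fin n) (Fin n) ℝ :=
  if h : X.PosSemidef then
    (h.1.eigenvectorUnitary : Matrix (Fin n) (Fin n) ℝ) *
      diagonal (fun i => Real.sqrt (h.1.eigenvalues i)) *
      (star h.1.eigenvectorUnitary : Matrix (Fin n) (Fin n) ℝ)
  else 0

lemma psdSqrt_eq_cfc {n : ℕ} {X : Matrix (Fin n) (Fin n) ℝ} (h : X.PosSemidef) :
    psdSqrt X = cfc Real.sqrt X := by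
  rw [h.1.cfc_eq, IsHermitian.cfc, Unitary.conjStarAlgAut_apply, psdSqrt, dif_pos h]
  simp [Function.comp_def]

noncomputable def Matrix.PosSemidef.sqrt {n : ℕ} {X : Matrix (Fin n) (Fin n) ℝ}
    (_h : X.PosSemidef) : Matrix (Fin n) (Fin n) ℝ := psdSqrt X

open scoped MatrixOrder in
lemma Matrix.PosSemidef.sqrt_eq_csqrt {n : ℕ} {X : Matrix (Fin n) (Fin n) ℝ}
    (h : X.PosSemidef) : h.sqrt = CFC.sqrt X := by
  rw [Matrix.PosSemidef.sqrt, psdSqrt_eq_cfc h,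
    CFC.sqrt_eq_real_sqrt X (nonneg_iff_posSemidef.mpr h), cfcₙ_eq_cfc]

open scoped MatrixOrder in
lemma Matrix.PosSemidef.posSemidef_sqrt {n : ℕ} {X : Matrix (Fin n) (Fin n) ℝ}
    (h : X.PosSemidef) : h.sqrt.PosSemidef := by
  rw [h.sqrt_eq_csqrt, ← nonneg_iff_posSemidef]
  exact CFC.sqrt_nonneg _

open scoped MatrixOrder in
lemma Matrix.PosSemidef.sqrt_mul_self {n : ℕ} {X : Matrix (Fin n) (Fin n) ℝ}
    (h : X.PosSemidef) : h.sqrt * h.sqrt = X := by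
  rw [h.sqrt_eq_csqrt]
  exact CFC.sqrt_mul_sqrt_self X (nonneg_iff_posSemidef.mpr h)

open scoped MatrixOrder in
lemma Matrix.PosSemidef.eq_sqrt_of_sq_eq {n : ℕ} {M X : Matrix (Fin n) (Fin n) ℝ}
    (hM : M.PosSemidef) (hX : X.PosSemidef) (hsq : M ^ 2 = X) : M = hX.sqrt := by
  rw [hX.sqrt_eq_csqrt, ← hsq, CFC.sqrt_sq M (nonneg_iff_posSemidef.mpr hM)]

lemma psdSqrt_eq {n : ℕ} {X : Matrix (Fin n) (Fin n) ℝ} (h : X.PosSemidef) :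
    psdSqrt X = h.sqrt := rfl

lemma psdSqrt_mul_self {n : ℕ} {M : Matrix (Fin n) (Fin n) ℝ} (hM : M.PosSemidef) :
    psdSqrt (M * M) = M := by
  have h2 : (M * M).PosSemidef := by rw [← pow_two]; exact hM.pow 2
  rw [psdSqrt_eq h2]
  exact (hM.eq_sqrt_of_sq_eq h2 (by rw [pow_two])).symm

lemma posDef_smul' {n : ℕ} {M : Matrix (Fin n) (Fin n) ℝ} (hM : M.PosDef) {c : ℝ}
    (hc : 0 < c) : (c • M).PosDef := hM.smul hc

lemma posSemidef_smul' {n : ℕ} {M : Matrix (Fin n) (Fin n) ℝ} (hM : M.PosSemidef) {c : ℝ}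
    (hc : 0 ≤ c) : (c • M).PosSemidef := hM.smul hc

lemma posDef_transpose_mul_self' {n : ℕ} {A : Matrix (Fin n) (Fin n) ℝ}
    (hA : IsUnit A.det) : (Aᵀ * A).PosDef := by
  have hps : (Aᵀ * A).PosSemidef := by
    have := posSemidef_conjTranspose_mul_self A
    rwa [conjTranspose_eq_transpose_of_trivial] at this
  refine PosDef.of_dotProduct_mulVec_pos hps.1 fun x hx => ?_
  have hAx : A *ᵥ x ≠ 0 := by
    intro h
    apply hx
    have hinj : Function.Injective (A.mulVec) :=
      mulVec_injective_iff_isUnit.mpr ((isUnit_iff_isUnit_det A).mpr hA)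
    exact hinj (by rw [h, mulVec_zero])
  have hval : star x ⬝ᵥ (Aᵀ * A) *ᵥ x = star (A *ᵥ x) ⬝ᵥ (A *ᵥ x) := by
    rw [← mulVec_mulVec, dotProduct_mulVec]
    simp [vecMul_transpose]
  rw [hval]
  exact dotProduct_star_self_pos_iff.mpr hAx

lemma posDef_of_posSemidef_isUnit {n : ℕ} {M : Matrix (Fin n) (Fin n) ℝ}
    (hM : M.PosSemidef) (hdet : IsUnit M.det) : M.PosDef := by
  have hRps := hM.posSemidef_sqrt
  have hRT : (hM.sqrt)ᵀ = hM.sqrt := by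
    rw [← conjTranspose_eq_transpose_of_trivial]; exact hRps.1
  have hdR : IsUnit hM.sqrt.det := by
    rw [isUnit_iff_ne_zero]
    intro h
    have h1 : hM.sqrt.det * hM.sqrt.det = M.det := by rw [← det_mul, hM.sqrt_mul_self]
    rw [isUnit_iff_ne_zero] at hdet
    exact hdet (by rw [← h1, h, zero_mul])
  have hMeq : M = (hM.sqrt)ᵀ * hM.sqrt := by rw [hRT, hM.sqrt_mul_self]
  rw [hMeq]
  exact posDef_transpose_mul_self' hdR

/-- Let A be an invertible real n×n matrix and
γ(t) = A e^{−2t} + (1 − e^{−2t})·A(√(AᵀA))⁻¹ for t ≥ 0.  Then γ(0) = A, γ(t) is invertible for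
all t ≥ 0, γ satisfies γ′(t) = −2γ(t) + 2(γ(t)ᵀ)⁻¹·√(γ(t)ᵀγ(t)) for all t ≥ 0, and γ(t)
converges as t → ∞ to the orthogonal matrix A(√(AᵀA))⁻¹. -/
theorem gradient_flow_line_GL {n : ℕ} (A : Matrix (Fin n) (Fin n) ℝ) (hA : IsUnit A.det) :
    letI γ : ℝ → Matrix (Fin n) (Fin n) ℝ := fun t =>
      Real.exp (-2 * t) • A + (1 - Real.exp (-2 * t)) • (A * (psdSqrt (Aᵀ * A))⁻¹)
    γ 0 = A ∧
    (∀ t : ℝ, 0 ≤ t → IsUnit (γ t).det) ∧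
    (∀ t : ℝ, 0 ≤ t →
      HasDerivAt γ ((-2 : ℝ) • γ t + (2 : ℝ) • (((γ t)ᵀ)⁻¹ * psdSqrt ((γ t)ᵀ * γ t))) t) ∧
    (A * (psdSqrt (Aᵀ * A))⁻¹)ᵀ * (A * (psdSqrt (Aᵀ * A))⁻¹) = 1 ∧
    Tendsto γ atTop (nhds (A * (psdSqrt (Aᵀ * A))⁻¹)) := by
  set γ : ℝ → Matrix (Fin n) (Fin n) ℝ := fun t =>
    Real.exp (-2 * t) • A + (1 - Real.exp (-2 * t)) • (A * (psdSqrt (Aᵀ * A))⁻¹) with hγdef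
  have hP : (Aᵀ * A).PosDef := posDef_transpose_mul_self' hA
  have hPS : (Aᵀ * A).PosSemidef := hP.posSemidef
  set S : Matrix (Fin n) (Fin n) ℝ := psdSqrt (Aᵀ * A) with hSdef
  have hSps : S.PosSemidef := by rw [hSdef, psdSqrt_eq hPS]; exact hPS.posSemidef_sqrt
  have hSS : S * S = Aᵀ * A := by rw [hSdef, psdSqrt_eq hPS]; exact hPS.sqrt_mul_self
  have hSdet : IsUnit S.det := by
    rw [isUnit_iff_ne_zero]
    intro h
    have hz : (Aᵀ * A).det = 0 := by rw [← hSS, det_mul, h, zero_mul]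
    exact hP.det_pos.ne' hz
  have hSpd : S.PosDef := posDef_of_posSemidef_isUnit hSps hSdet
  have hST : Sᵀ = S := by
    rw [← conjTranspose_eq_transpose_of_trivial]; exact hSps.1
  set Q : Matrix (Fin n) (Fin n) ℝ := A * S⁻¹ with hQdef
  have hQl : Qᵀ * Q = 1 := by
    rw [hQdef, transpose_mul, transpose_nonsing_inv, hST]
    calc S⁻¹ * Aᵀ * (A * S⁻¹) = S⁻¹ * (Aᵀ * A) * S⁻¹ := by simp only [mul_assoc]
      _ = S⁻¹ * (S * S) * S⁻¹ := by rw [hSS]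
      _ = (S⁻¹ * S) * (S * S⁻¹) := by simp only [mul_assoc]
      _ = 1 := by rw [nonsing_inv_mul _ hSdet, mul_nonsing_inv _ hSdet, mul_one]
  have hQdet : IsUnit Q.det := by
    have h1 : Q.det * Q.det = 1 := by
      have := congrArg det hQl
      rwa [det_mul, det_transpose, det_one] at this
    exact IsUnit.of_mul_eq_one _ h1
  have hQS : Q * S = A := by rw [hQdef, mul_assoc, nonsing_inv_mul _ hSdet, mul_one]
  -- main pointwise facts for t ≥ 0
  have key : ∀ t : ℝ, 0 ≤ t →
      IsUnit (γ t).det ∧ ((γ t)ᵀ)⁻¹ * psdSqrt ((γ t)ᵀ * γ t) = Q := by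
    intro t ht
    have hf0 : (0:ℝ) < Real.exp (-2 * t) := Real.exp_pos _
    have hf1 : Real.exp (-2 * t) ≤ 1 := by
      have := Real.exp_le_exp.mpr (show -2 * t ≤ 0 by linarith)
      simpa using this
    set f : ℝ := Real.exp (-2 * t) with hf
    set M : Matrix (Fin n) (Fin n) ℝ := f • S + (1 - f) • (1 : Matrix (Fin n) (Fin n) ℝ)
      with hMdef
    have hMpd : M.PosDef :=
      (posDef_smul' hSpd hf0).add_posSemidef
        (posSemidef_smul' Matrix.PosSemidef.one (by linarith))
    have hMdet : IsUnit M.det := isUnit_iff_ne_zero.mpr hMpd.det_pos.ne'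
    have hMT : Mᵀ = M := by
      rw [← conjTranspose_eq_transpose_of_trivial]; exact hMpd.1
    have hγQM : γ t = Q * M := by
      show f • A + (1 - f) • Q = Q * M
      rw [hMdef, mul_add, mul_smul_comm, mul_smul_comm, hQS, mul_one]
    have hγγ : (γ t)ᵀ * γ t = M * M := by
      rw [hγQM, transpose_mul, hMT]
      calc M * Qᵀ * (Q * M) = M * (Qᵀ * Q) * M := by simp only [mul_assoc]
        _ = M * M := by rw [hQl, mul_one]
    refine ⟨?_, ?_⟩
    · rw [hγQM, det_mul]
      exact hQdet.mul hMdet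
    · rw [hγγ, psdSqrt_mul_self hMpd.posSemidef, hγQM, transpose_mul, hMT,
        Matrix.mul_inv_rev, mul_assoc, nonsing_inv_mul _ hMdet, mul_one,
        inv_eq_right_inv hQl]
  refine ⟨?_, fun t ht => (key t ht).1, fun t ht => ?_, hQl, ?_⟩
  · show Real.exp (-2 * 0) • A + (1 - Real.exp (-2 * 0)) • Q = A
    norm_num
  · -- derivative
    rw [(key t ht).2]
    have hlin : HasDerivAt (fun s : ℝ => -2 * s) (-2) t := by
      simpa using (hasDerivAt_id t).const_mul (-2 : ℝ)
    have h1 : HasDerivAt (fun s : ℝ => Real.exp (-2 * s)) (Real.exp (-2 * t) * -2) t :=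
      hlin.exp
    have h2 := h1.smul_const A
    have h3 := ((hasDerivAt_const t (1:ℝ)).sub h1).smul_const Q
    have h5 := h2.add h3
    have hγt : γ t = Real.exp (-2 * t) • A + (1 - Real.exp (-2 * t)) • Q := rfl
    refine HasDerivAt.congr_deriv h5 ?_
    rw [hγt]
    module
  · -- limit
    have hneg : Tendsto (fun t : ℝ => -2 * t) atTop atBot := by
      apply Tendsto.const_mul_atTop_of_neg (by norm_num : (-2:ℝ) < 0) tendsto_id
    have hexp : Tendsto (fun t : ℝ => Real.exp (-2 * t)) atTop (nhds 0) :=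
      Real.tendsto_exp_atBot.comp hneg
    have h1 := hexp.smul_const A
    have h2 : Tendsto (fun s : ℝ => (1 - Real.exp (-2 * s)) • Q) atTop
        (nhds (((1:ℝ) - 0) • Q)) :=
      (tendsto_const_nhds.sub hexp).smul_const Q
    have h3 := h1.add h2
    show Tendsto γ atTop (nhds Q)
    have heq : (0:ℝ) • A + ((1:ℝ) - 0) • Q = Q := by simp
    rw [← heq]
    exact h3
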